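/- Let V be a finite set, P a row-stochastic matrix indexed by V (non-negative entries, each row summing to 1), S ⊆ V nonempty, and T = V \ S. Suppose that for every p ∈ T there exists s ∈ S and a directed path from p to s (a sequence p = v_0, v_1, …, v_m = s with P_{v_t v_{t+1}} > 0 for all t). Then the matrix I − P_TT is invertible and (I − P_TT)^{-1} = ∑_{k=0}^∞ (P_TT)^k, where the series of matrix powers converges. -/

import Mathlib

open Finset

attribute [local instance]
  Matrix.linftyOpNormedRing Matrix.linftyOpNormedAlgebra

section aux

variable {n : Type*} [Fintype n] [DecidableEq n]

lemma aux_pow_nonneg (Q : Matrix n n ℝ) (hQ0 : ∀ i j, 0 ≤ Q i j) :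
    ∀ (k : ℕ) (i j), 0 ≤ (Q ^ k) i j := by
  intro k
  induction k with
  | zero =>
    intro i j
    by_cases h : i = j <;> simp [Matrix.one_apply, h]
  | succ k ih =>
    intro i j
    rw [pow_succ, Matrix.mul_apply]
    exact Finset.sum_nonneg fun l _ => mul_nonneg (ih i l) (hQ0 l j)

lemma aux_pow_rowsum (Q : Matrix n n ℝ) (hQ0 : ∀ i j, 0 ≤ Q i j)
    (hQ1 : ∀ i, ∑ j, Q i j ≤ 1) : ∀ (k : ℕ) (i), ∑ j, (Q ^ k) i j ≤ 1 := by
  intro k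
  induction k with
  | zero => intro i; simp [Matrix.one_apply]
  | succ k ih =>
    intro i
    have : ∑ j, (Q ^ (k + 1)) i j = ∑ l, (Q ^ k) i l * ∑ j, Q l j := by
      rw [pow_succ]
      simp only [Matrix.mul_apply]
      rw [Finset.sum_comm]
      simp only [← Finset.mul_sum]
    rw [this]
    calc ∑ l, (Q ^ k) i l * ∑ j, Q l j ≤ ∑ l, (Q ^ k) i l := by
          exact Finset.sum_le_sum fun l _ =>
            mul_le_of_le_one_right (aux_pow_nonneg Q hQ0 k i l) (hQ1 l)
      _ ≤ 1 := ih i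

lemma aux_rowsum_antitone (Q : Matrix n n ℝ) (hQ0 : ∀ i j, 0 ≤ Q i j)
    (hQ1 : ∀ i, ∑ j, Q i j ≤ 1) {k l : ℕ} (hkl : k ≤ l) (i : n) :
    ∑ j, (Q ^ l) i j ≤ ∑ j, (Q ^ k) i j := by
  induction l, hkl using Nat.le_induction with
  | base => exact le_refl _
  | succ l hkl ih =>
    refine le_trans ?_ ih
    have : ∑ j, (Q ^ (l + 1)) i j = ∑ m, (Q ^ l) i m * ∑ j, Q m j := by
      rw [pow_succ]
      simp only [Matrix.mul_apply]
      rw [Finset.sum_comm]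
      simp only [← Finset.mul_sum]
    rw [this]
    exact Finset.sum_le_sum fun m _ =>
      mul_le_of_le_one_right (aux_pow_nonneg Q hQ0 l i m) (hQ1 m)

lemma aux_norm_le_one (A : Matrix n n ℝ) (h0 : ∀ i j, 0 ≤ A i j)
    (h : ∀ i, ∑ j, A i j ≤ 1) : ‖A‖ ≤ 1 := by
  rw [Matrix.linfty_opNorm_def]
  rw [show (1 : ℝ) = ((1 : NNReal) : ℝ) by norm_num, NNReal.coe_le_coe]
  refine Finset.sup_le fun i _ => ?_
  rw [← NNReal.coe_le_coe]
  push_cast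
  calc ∑ j, ‖A i j‖ = ∑ j, A i j := by
        exact Finset.sum_congr rfl fun j _ => Real.norm_of_nonneg (h0 i j)
    _ ≤ 1 := h i

lemma aux_norm_lt_one (A : Matrix n n ℝ) (h0 : ∀ i j, 0 ≤ A i j)
    (h : ∀ i, ∑ j, A i j < 1) : ‖A‖ < 1 := by
  rw [Matrix.linfty_opNorm_def]
  rw [show (1 : ℝ) = ((1 : NNReal) : ℝ) by norm_num, NNReal.coe_lt_coe]
  rw [Finset.sup_lt_iff (by norm_num : (⊥ : NNReal) < 1)]
  intro i _
  rw [← NNReal.coe_lt_coe]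
  push_cast
  calc ∑ j, ‖A i j‖ = ∑ j, A i j := by
        exact Finset.sum_congr rfl fun j _ => Real.norm_of_nonneg (h0 i j)
    _ < 1 := h i

end aux

section escape

variable {V : Type*} [Fintype V] [DecidableEq V]

lemma aux_sub_rowsum (P : Matrix V V ℝ) (hP0 : ∀ i j, 0 ≤ P i j)
    (hP1 : ∀ i, ∑ j, P i j = 1) (S : Finset V) (i : {x // x ∈ Sᶜ}) :
    ∑ j, (P.submatrix (fun a : {x // x ∈ Sᶜ} => (a : V))
      (fun a : {x // x ∈ Sᶜ} => (a : V))) i j ≤ 1 := by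
  have : ∑ j, (P.submatrix (fun a : {x // x ∈ Sᶜ} => (a : V))
      (fun a : {x // x ∈ Sᶜ} => (a : V))) i j = ∑ j ∈ Sᶜ, P (i : V) j :=
    Finset.sum_coe_sort Sᶜ (fun j => P (i : V) j)
  rw [this, ← hP1 (i : V)]
  exact Finset.sum_le_sum_of_subset_of_nonneg (Finset.subset_univ _)
    fun j _ _ => hP0 _ _

lemma aux_escape (P : Matrix V V ℝ) (hP0 : ∀ i j, 0 ≤ P i j)
    (hP1 : ∀ i, ∑ j, P i j = 1) (S : Finset V) :
    ∀ (m : ℕ) (v : ℕ → V) (h0 : v 0 ∉ S), (∀ t, t < m → v t ∉ S) → v m ∈ S →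
      (∀ t, t < m → 0 < P (v t) (v (t + 1))) →
      ∑ j, ((P.submatrix (fun a : {x // x ∈ Sᶜ} => (a : V))
          (fun a : {x // x ∈ Sᶜ} => (a : V))) ^ m)
        ⟨v 0, Finset.mem_compl.mpr h0⟩ j < 1 := by
  set Q := P.submatrix (fun a : {x // x ∈ Sᶜ} => (a : V))
      (fun a : {x // x ∈ Sᶜ} => (a : V)) with hQdef
  have hQ0 : ∀ i j, 0 ≤ Q i j := fun i j => hP0 _ _
  have hQ1 : ∀ i, ∑ j, Q i j ≤ 1 := aux_sub_rowsum P hP0 hP1 S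
  intro m
  induction m with
  | zero => intro v h0 _ hm _; exact absurd hm h0
  | succ m ih =>
    intro v h0 hT hm hpos
    have hrw : ∀ i, ∑ j, (Q ^ (m + 1)) i j = ∑ l, Q i l * ∑ j, (Q ^ m) l j := by
      intro i
      rw [pow_succ']
      simp only [Matrix.mul_apply]
      rw [Finset.sum_comm]
      simp only [← Finset.mul_sum]
    rcases Nat.eq_zero_or_pos m with rfl | hm1
    · -- one step: v 1 ∈ S
      have h1 : ∑ j, (Q ^ 1) ⟨v 0, Finset.mem_compl.mpr h0⟩ j
          = ∑ j ∈ Sᶜ, P (v 0) j := by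
        rw [pow_one]
        exact Finset.sum_coe_sort Sᶜ (fun j => P (v 0) j)
      rw [h1]
      have hsplit : ∑ j ∈ Sᶜ, P (v 0) j + ∑ j ∈ S, P (v 0) j = 1 := by
        rw [Finset.sum_compl_add_sum]; exact hP1 _
      have hps : 0 < ∑ j ∈ S, P (v 0) j :=
        lt_of_lt_of_le (hpos 0 one_pos)
          (Finset.single_le_sum (fun j _ => hP0 (v 0) j) hm)
      linarith
    · have h1T : v 1 ∉ S := hT 1 (by omega)
      have ihl := ih (fun t => v (t + 1)) h1T
        (fun t ht => hT (t + 1) (by omega)) hm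
        (fun t ht => hpos (t + 1) (by omega))
      rw [hrw]
      set p : {x // x ∈ Sᶜ} := ⟨v 0, Finset.mem_compl.mpr h0⟩
      set l₀ : {x // x ∈ Sᶜ} := ⟨v 1, Finset.mem_compl.mpr h1T⟩
      have hQp : 0 < Q p l₀ := hpos 0 (by omega)
      calc ∑ l, Q p l * ∑ j, (Q ^ m) l j < ∑ l, Q p l := by
            refine Finset.sum_lt_sum
              (fun l _ => mul_le_of_le_one_right (hQ0 p l)
                (aux_pow_rowsum Q hQ0 hQ1 m l)) ⟨l₀, Finset.mem_univ _, ?_⟩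
            calc Q p l₀ * ∑ j, (Q ^ m) l₀ j < Q p l₀ * 1 :=
                  mul_lt_mul_of_pos_left ihl hQp
              _ = Q p l₀ := mul_one _
        _ ≤ 1 := hQ1 p

end escape

theorem isUnit_one_sub_submatrix_of_connected_to_boundary
    {V : Type*} [Fintype V] [DecidableEq V]
    (P : Matrix V V ℝ)
    (hP0 : ∀ i j, 0 ≤ P i j) (hP1 : ∀ i, ∑ j, P i j = 1)
    (S : Finset V) (hS : S.Nonempty)
    (hconn : ∀ p ∈ Sᶜ, ∃ (m : ℕ) (v : ℕ → V), v 0 = p ∧ v m ∈ S ∧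
      ∀ t < m, 0 < P (v t) (v (t + 1))) :
    IsUnit (1 - P.submatrix (fun a : {x // x ∈ Sᶜ} => (a : V))
        (fun a : {x // x ∈ Sᶜ} => (a : V))) ∧
    HasSum (fun k : ℕ => (P.submatrix (fun a : {x // x ∈ Sᶜ} => (a : V))
        (fun a : {x // x ∈ Sᶜ} => (a : V))) ^ k)
      (1 - P.submatrix (fun a : {x // x ∈ Sᶜ} => (a : V))
        (fun a : {x // x ∈ Sᶜ} => (a : V)))⁻¹ := by
  set Q := P.submatrix (fun a : {x // x ∈ Sᶜ} => (a : V))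
      (fun a : {x // x ∈ Sᶜ} => (a : V)) with hQdef
  have hQ0 : ∀ i j, 0 ≤ Q i j := fun i j => hP0 _ _
  have hQ1 : ∀ i, ∑ j, Q i j ≤ 1 := aux_sub_rowsum P hP0 hP1 S
  -- for each p there is m with row sum of Q^m at p < 1
  have hex : ∀ p : {x // x ∈ Sᶜ}, ∃ m : ℕ, ∑ j, (Q ^ m) p j < 1 := by
    intro p
    obtain ⟨m, v, hv0, hvm, hpos⟩ := hconn (p : V) p.2
    have hfind : ∃ t, v t ∈ S := ⟨m, hvm⟩
    classical
    set k := Nat.find hfind with hk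
    have hkS : v k ∈ S := Nat.find_spec hfind
    have hkm : k ≤ m := Nat.find_min' hfind hvm
    have hkT : ∀ t, t < k → v t ∉ S := fun t ht => Nat.find_min hfind ht
    have h0 : v 0 ∉ S := by
      rw [hv0]; exact Finset.mem_compl.mp p.2
    have := aux_escape P hP0 hP1 S k v h0 hkT hkS
      (fun t ht => hpos t (lt_of_lt_of_le ht hkm))
    refine ⟨k, ?_⟩
    have hpe : (⟨v 0, Finset.mem_compl.mpr h0⟩ : {x // x ∈ Sᶜ}) = p :=
      Subtype.ext hv0
    rwa [hpe] at this
  classical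
  choose f hf using hex
  set M : ℕ := (Finset.univ.sup f) + 1 with hM
  have hMrow : ∀ p : {x // x ∈ Sᶜ}, ∑ j, (Q ^ M) p j < 1 := by
    intro p
    refine lt_of_le_of_lt (aux_rowsum_antitone Q hQ0 hQ1 ?_ p) (hf p)
    calc f p ≤ Finset.univ.sup f := Finset.le_sup (Finset.mem_univ p)
      _ ≤ M := by omega
  have hr : ‖Q ^ M‖ < 1 :=
    aux_norm_lt_one _ (aux_pow_nonneg Q hQ0 M) hMrow
  set r : ℝ := ‖Q ^ M‖ with hrdef
  have hr0 : 0 ≤ r := norm_nonneg _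
  have hQMq : ∀ q : ℕ, ‖(Q ^ M) ^ q‖ ≤ r ^ q := by
    intro q
    induction q with
    | zero =>
      simp only [pow_zero]
      exact aux_norm_le_one _ (aux_pow_nonneg Q hQ0 0) (aux_pow_rowsum Q hQ0 hQ1 0)
    | succ q ih =>
      calc ‖(Q ^ M) ^ (q + 1)‖ ≤ ‖(Q ^ M) ^ q‖ * ‖Q ^ M‖ := by
            rw [pow_succ]; exact norm_mul_le _ _
        _ ≤ r ^ q * r := by
            exact mul_le_mul ih le_rfl (norm_nonneg _) (pow_nonneg hr0 q)
        _ = r ^ (q + 1) := (pow_succ r q).symm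
  have hpowle : ∀ k : ℕ, ‖Q ^ k‖ ≤ 1 := fun k =>
    aux_norm_le_one _ (aux_pow_nonneg Q hQ0 k) (aux_pow_rowsum Q hQ0 hQ1 k)
  have hbound : ∀ k : ℕ, ‖Q ^ k‖ ≤ r ^ (k / M) := by
    intro k
    have hdecomp : Q ^ k = (Q ^ M) ^ (k / M) * Q ^ (k % M) := by
      rw [← pow_mul, ← pow_add, Nat.div_add_mod]
    calc ‖Q ^ k‖ ≤ ‖(Q ^ M) ^ (k / M)‖ * ‖Q ^ (k % M)‖ := by
          rw [hdecomp]; exact norm_mul_le _ _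
      _ ≤ r ^ (k / M) * 1 :=
          mul_le_mul (hQMq _) (hpowle _) (norm_nonneg _) (pow_nonneg hr0 _)
      _ = r ^ (k / M) := mul_one _
  -- summability of the comparison series
  haveI : NeZero M := ⟨by omega⟩
  have hgsum : Summable (fun k : ℕ => r ^ (k / M)) := by
    have h2 : Summable (fun pr : ℕ × Fin M => r ^ pr.1) := by
      refine (summable_prod_of_nonneg (fun pr => pow_nonneg hr0 _)).mpr
        ⟨fun q => summable_of_finite_support (Set.toFinite _), ?_⟩
      have : (fun q : ℕ => ∑' _ : Fin M, r ^ q)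
          = fun q : ℕ => (M : ℝ) * r ^ q := by
        funext q
        rw [tsum_fintype]
        simp [Finset.sum_const, nsmul_eq_mul]
      rw [this]
      exact (summable_geometric_of_lt_one hr0 hr).mul_left _
    have := ((Nat.divModEquiv M).summable_iff
      (f := fun pr : ℕ × Fin M => r ^ pr.1)).mpr h2
    exact this
  have hsummable : Summable (fun k : ℕ => Q ^ k) :=
    Summable.of_norm_bounded hgsum hbound
  have hhs : HasSum (fun k : ℕ => Q ^ k) (∑' k : ℕ, Q ^ k) := hsummable.hasSum
  set s : Matrix {x // x ∈ Sᶜ} {x // x ∈ Sᶜ} ℝ := ∑' k : ℕ, Q ^ k with hs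
  -- Q ^ n tends to 0
  have hlim0 : Filter.Tendsto (fun k : ℕ => Q ^ k) Filter.atTop (nhds 0) := by
    refine squeeze_zero_norm hbound ?_
    have := hgsum.tendsto_atTop_zero
    exact this
  -- left inverse
  have hleft : (1 - Q) * s = 1 := by
    have h1 := (hhs.mul_left (1 - Q)).tendsto_sum_nat
    have h2 : ∀ n : ℕ, ∑ k ∈ Finset.range n, (1 - Q) * Q ^ k = 1 - Q ^ n := by
      intro n
      calc ∑ k ∈ Finset.range n, (1 - Q) * Q ^ k
          = ∑ k ∈ Finset.range n, (Q ^ k - Q ^ (k + 1)) := by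
            refine Finset.sum_congr rfl fun k _ => ?_
            rw [sub_mul, one_mul, ← pow_succ']
        _ = Q ^ 0 - Q ^ n := Finset.sum_range_sub' (fun k => Q ^ k) n
        _ = 1 - Q ^ n := by rw [pow_zero]
    simp only [h2] at h1
    have h3 : Filter.Tendsto (fun n : ℕ => 1 - Q ^ n) Filter.atTop
        (nhds (1 - 0)) := tendsto_const_nhds.sub hlim0
    have := tendsto_nhds_unique h1 h3
    rw [this, sub_zero]
  have hright : s * (1 - Q) = 1 := by
    have h1 := (hhs.mul_right (1 - Q)).tendsto_sum_nat
    have h2 : ∀ n : ℕ, ∑ k ∈ Finset.range n, Q ^ k * (1 - Q) = 1 - Q ^ n := by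
      intro n
      calc ∑ k ∈ Finset.range n, Q ^ k * (1 - Q)
          = ∑ k ∈ Finset.range n, (Q ^ k - Q ^ (k + 1)) := by
            refine Finset.sum_congr rfl fun k _ => ?_
            rw [mul_sub, mul_one, ← pow_succ]
        _ = Q ^ 0 - Q ^ n := Finset.sum_range_sub' (fun k => Q ^ k) n
        _ = 1 - Q ^ n := by rw [pow_zero]
    simp only [h2] at h1
    have h3 : Filter.Tendsto (fun n : ℕ => 1 - Q ^ n) Filter.atTop
        (nhds (1 - 0)) := tendsto_const_nhds.sub hlim0
    have := tendsto_nhds_unique h1 h3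
    rw [this, sub_zero]
  constructor
  · exact ⟨⟨1 - Q, s, hleft, hright⟩, rfl⟩
  · rw [Matrix.inv_eq_right_inv hleft]
    exact hhs
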